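/- Let q be a prime power and s, n, k positive integers with k < n. Let C ⊆ 𝔽_{q^s}^n be a k-dimensional 𝔽_{q^s}-linear code with information set I ⊆ {1,…,n}, and let Γ = {γ_1,…,γ_s} be a basis of 𝔽_{q^s} over 𝔽_q with V = span_{𝔽_q}(γ_1,…,γ_v) and W = span_{𝔽_q}(γ_{v+1},…,γ_s). Let φ_{Ī} denote extension by zeros on the coordinates in I. Then, viewing 𝔽_{q^s}^n as an 𝔽_q-vector space, 𝔽_{q^s}^n = C ⊕ φ_{Ī}(V^{n-k}) ⊕ φ_{Ī}(W^{n-k}) as a direct sum of 𝔽_q-subspaces. -/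

import Mathlib

/-- Direct sum decomposition 𝔽_{q^s}^n = C ⊕ φ_Ī(V^{n-k}) ⊕ φ_Ī(W^{n-k}) over 𝔽_q. -/
theorem stmt_0 (q s n k v : ℕ) (hq : IsPrimePow q) (hs : 0 < s) (hn : 0 < n)
    (hk : 0 < k) (hkn : k < n) (hv : v ≤ s)
    (F K : Type) [Field F] [Fintype F] [Field K] [Algebra F K]
    (hF : Fintype.card F = q)
    (γ : Module.Basis (Fin s) F K)
    (C : Submodule K (Fin n → K)) (hCdim : Module.finrank K C = k)
    (I : Finset (Fin n)) (hIcard : I.card = k)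
    (hinfo : Function.Bijective fun (c : C) (i : I) => (c : Fin n → K) i.1)
    (V W : Submodule F K)
    (hV : V = Submodule.span F (⇑γ '' {i : Fin s | (i : ℕ) < v}))
    (hW : W = Submodule.span F (⇑γ '' {i : Fin s | v ≤ (i : ℕ)}))
    (VE WE : Submodule F (Fin n → K))
    (hVE : VE = Submodule.pi Set.univ
      (fun i => if i ∈ I then (⊥ : Submodule F K) else V))
    (hWE : WE = Submodule.pi Set.univ
      (fun i => if i ∈ I then (⊥ : Submodule F K) else W)) :
    (Submodule.restrictScalars F C) ⊓ (VE ⊔ WE) = ⊥ ∧ VE ⊓ WE = ⊥ ∧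
      (Submodule.restrictScalars F C) ⊔ VE ⊔ WE = ⊤ := by
  -- V and W are disjoint and span K
  have hVW_bot : V ⊓ W = ⊥ := by
    rw [hV, hW]
    refine disjoint_iff.mp (γ.linearIndependent.disjoint_span_image ?_)
    rw [Set.disjoint_left]
    intro i hi hi'
    simp only [Set.mem_setOf_eq] at hi hi'
    omega
  have hVW_top : V ⊔ W = ⊤ := by
    rw [hV, hW, ← Submodule.span_union, ← Set.image_union]
    have hu : {i : Fin s | (i : ℕ) < v} ∪ {i : Fin s | v ≤ (i : ℕ)} = Set.univ := by
      ext i; simp; omega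
    rw [hu, Set.image_univ, γ.span_eq]
  -- E : functions vanishing on I
  set E : Submodule F (Fin n → K) :=
    Submodule.pi Set.univ (fun i => if i ∈ I then (⊥ : Submodule F K) else ⊤) with hE
  have memE : ∀ x : Fin n → K, x ∈ E ↔ ∀ i ∈ I, x i = 0 := by
    intro x
    constructor
    · intro hx i hi
      have := hx i (Set.mem_univ i)
      simpa [hi] using this
    · intro hx i _
      by_cases hi : i ∈ I
      · simpa [hi] using hx i hi
      · simp [hi]
  have hVE_le : VE ≤ E := by
    intro x hx
    rw [memE]
    intro i hi
    have := (hVE ▸ hx) i (Set.mem_univ i)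
    simpa [hi] using this
  have hWE_le : WE ≤ E := by
    intro x hx
    rw [memE]
    intro i hi
    have := (hWE ▸ hx) i (Set.mem_univ i)
    simpa [hi] using this
  have hsupE : VE ⊔ WE = E := by
    refine le_antisymm (sup_le hVE_le hWE_le) ?_
    intro x hx
    have hx' : ∀ i, ∃ p : K × K, p.1 ∈ V ∧ p.2 ∈ W ∧ p.1 + p.2 = x i ∧
        (i ∈ I → p.1 = 0 ∧ p.2 = 0) := by
      intro i
      by_cases hi : i ∈ I
      · refine ⟨(0, 0), zero_mem _, zero_mem _, ?_, fun _ => ⟨rfl, rfl⟩⟩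
        simp [(memE x).mp hx i hi]
      · have : x i ∈ V ⊔ W := hVW_top ▸ Submodule.mem_top
        obtain ⟨a, ha, b, hb, hab⟩ := Submodule.mem_sup.mp this
        exact ⟨(a, b), ha, hb, hab, fun h => absurd h hi⟩
    choose p hV' hW' hadd hzero using hx'
    have hxa : (fun i => (p i).1) ∈ VE := by
      rw [hVE]
      intro i _
      by_cases hi : i ∈ I
      · simp [hi, (hzero i hi).1]
      · simpa [hi] using hV' i
    have hxb : (fun i => (p i).2) ∈ WE := by
      rw [hWE]
      intro i _
      by_cases hi : i ∈ I
      · simp [hi, (hzero i hi).2]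
      · simpa [hi] using hW' i
    have : x = (fun i => (p i).1) + (fun i => (p i).2) := by
      funext i; exact (hadd i).symm
    rw [this]
    exact Submodule.add_mem_sup hxa hxb
  refine ⟨?_, ?_, ?_⟩
  · -- C ⊓ E = ⊥
    rw [hsupE, eq_bot_iff]
    intro x hx
    have hxC : x ∈ C := hx.1
    have hxE : ∀ i ∈ I, x i = 0 := (memE x).mp hx.2
    have h0 : (⟨x, hxC⟩ : C) = (0 : C) := by
      apply hinfo.injective
      funext i
      exact (hxE i.1 i.2).trans (by simp)
    have : x = 0 := congrArg Subtype.val h0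
    simp [this]
  · -- VE ⊓ WE = ⊥
    rw [eq_bot_iff]
    intro x hx
    have : ∀ i, x i = 0 := by
      intro i
      by_cases hi : i ∈ I
      · exact (memE x).mp (hVE_le hx.1) i hi
      · have h1 : x i ∈ V := by
          have := (hVE ▸ hx.1) i (Set.mem_univ i); simpa [hi] using this
        have h2 : x i ∈ W := by
          have := (hWE ▸ hx.2) i (Set.mem_univ i); simpa [hi] using this
        have : x i ∈ V ⊓ W := ⟨h1, h2⟩
        simpa [hVW_bot] using this
    have : x = 0 := funext this
    simp [this]
  · -- C ⊔ VE ⊔ WE = ⊤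
    rw [sup_assoc, hsupE, eq_top_iff]
    intro x _
    obtain ⟨c, hc⟩ := hinfo.surjective (fun i : I => x i.1)
    have hcI : ∀ i ∈ I, (c : Fin n → K) i = x i := by
      intro i hi
      exact congrFun hc ⟨i, hi⟩
    have hxc : x - (c : Fin n → K) ∈ E := by
      rw [memE]
      intro i hi
      simp [hcI i hi]
    have hcC : (c : Fin n → K) ∈ Submodule.restrictScalars F C := c.2
    have : x = (c : Fin n → K) + (x - (c : Fin n → K)) := by ring
    rw [this]
    exact Submodule.add_mem_sup hcC hxc
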